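/- Let p > 2, let f be a nonnegative integrable function on a probability space (Ω, F, μ), and let A be a sub-σ-algebra of F. Then for every t > 0, t^p μ{ E[f | A] > t } ≤ N_p( f χ{ E[f | A] > t } )^p. -/

import Mathlib

open MeasureTheory ProbabilityTheory Filter Set
open scoped Topology ENNReal NNReal

noncomputable section

/-- `N_p(f) = sup_{A : μ(A) > 0} μ(A)^{−1+1/p} E[|f| χ_A]`, as an extended nonnegative real. -/
def Np {Ω : Type*} [MeasurableSpace Ω] (μ : Measure Ω) (p : ℝ) (f : Ω → ℝ) : ℝ≥0∞ :=
  ⨆ (A : Set Ω) (_ : MeasurableSet A) (_ : 0 < μ A),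
    μ A ^ (-1 + 1/p) * ∫⁻ ω in A, ENNReal.ofReal |f ω| ∂μ

/-- `‖f‖_{p,∞}^p = sup_{t > 0} t^p μ{|f| > t}`, as an extended nonnegative real. -/
def wkNormPow {Ω : Type*} [MeasurableSpace Ω] (μ : Measure Ω) (p : ℝ) (f : Ω → ℝ) : ℝ≥0∞ :=
  ⨆ (t : ℝ) (_ : 0 < t), ENNReal.ofReal (t ^ p) * μ {ω | t < |f ω|}

/-- **(1.17).** For nonnegative integrable `f` and a sub-σ-algebra `A`, for every `t > 0`,
`t^p μ{E[f | A] > t} ≤ N_p(f χ{E[f | A] > t})^p`. -/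
theorem statement9 {Ω : Type*} (A : MeasurableSpace Ω) [mΩ : MeasurableSpace Ω]
    (μ : Measure Ω) [IsProbabilityMeasure μ] (p : ℝ) (hp : 2 < p)
    (f : Ω → ℝ) (hf_nonneg : ∀ ω, 0 ≤ f ω) (hf_int : Integrable f μ)
    (hA : A ≤ mΩ) :
    ∀ t > (0:ℝ),
      ENNReal.ofReal (t ^ p) * μ {ω | t < (μ[f | A]) ω}
        ≤ (Np μ p (fun ω => ({ω' | t < (μ[f | A]) ω'}).indicator f ω)) ^ p := by
  intro t ht
  set S : Set Ω := {ω | t < (μ[f | A]) ω} with hS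
  have hp0 : (0:ℝ) < p := by linarith
  have hSA : MeasurableSet[A] S :=
    stronglyMeasurable_condExp.measurable (measurableSet_Ioi : MeasurableSet (Set.Ioi t))
  have hSm : MeasurableSet S := hA _ hSA
  rcases eq_or_lt_of_le (zero_le : 0 ≤ μ S) with h0 | hpos
  · rw [← h0, mul_zero]; exact zero_le
  have hμS_ne_top : μ S ≠ ⊤ := measure_ne_top μ S
  -- ∫ over S of f equals ∫ over S of condexp
  have hceq : ∫ ω in S, f ω ∂μ = ∫ ω in S, (μ[f | A]) ω ∂μ :=
    (setIntegral_condExp hA hf_int hSA).symm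
  have hlow : t * (μ S).toReal ≤ ∫ ω in S, f ω ∂μ := by
    rw [hceq]
    exact setIntegral_ge_of_const_le_real hSm hμS_ne_top
      (fun ω hω => le_of_lt hω) integrable_condExp.integrableOn
  -- lintegral of |indicator| over S
  have hind : ∫⁻ ω in S, ENNReal.ofReal |S.indicator f ω| ∂μ
      = ∫⁻ ω in S, ENNReal.ofReal (f ω) ∂μ := by
    refine setLIntegral_congr_fun hSm (fun ω hω => ?_)
    rw [Set.indicator_of_mem hω, abs_of_nonneg (hf_nonneg ω)]
  have hlint : ENNReal.ofReal t * μ S ≤ ∫⁻ ω in S, ENNReal.ofReal (f ω) ∂μ := by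
    rw [← ofReal_integral_eq_lintegral_ofReal hf_int.integrableOn
      (ae_of_all _ hf_nonneg)]
    calc ENNReal.ofReal t * μ S = ENNReal.ofReal (t * (μ S).toReal) := by
          rw [ENNReal.ofReal_mul ht.le, ENNReal.ofReal_toReal hμS_ne_top]
      _ ≤ _ := ENNReal.ofReal_le_ofReal hlow
  -- key bound with Np
  have hNp : ENNReal.ofReal t * μ S ^ (1/p) ≤
      Np μ p (fun ω => S.indicator f ω) := by
    have h1 : μ S ^ (-1 + 1/p) * ∫⁻ ω in S, ENNReal.ofReal |S.indicator f ω| ∂μ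
        ≤ Np μ p (fun ω => S.indicator f ω) :=
      le_iSup₂_of_le S hSm (le_iSup_of_le hpos le_rfl)
    refine le_trans ?_ h1
    rw [hind]
    have hrw : μ S ^ (-1 + 1/p) * μ S = μ S ^ (1/p) := by
      nth_rewrite 2 [← ENNReal.rpow_one (μ S)]
      rw [← ENNReal.rpow_add _ _ (ne_of_gt hpos) hμS_ne_top]
      norm_num
    calc ENNReal.ofReal t * μ S ^ (1/p)
        = μ S ^ (-1 + 1/p) * (ENNReal.ofReal t * μ S) := by
          rw [← mul_assoc, mul_comm (μ S ^ (-1 + 1/p)), mul_assoc, hrw]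
      _ ≤ _ := mul_le_mul_right hlint _
  calc ENNReal.ofReal (t ^ p) * μ S
      = (ENNReal.ofReal t * μ S ^ (1/p)) ^ p := by
        rw [ENNReal.mul_rpow_of_nonneg _ _ hp0.le, ← ENNReal.rpow_mul, one_div,
          inv_mul_cancel₀ hp0.ne', ENNReal.rpow_one, ENNReal.ofReal_rpow_of_pos ht]
    _ ≤ _ := ENNReal.rpow_le_rpow hNp hp0.le
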